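/- Let α > 0, γ > 0, ρ ≥ 0 be real numbers. The two roots x₁ = (ρ − α − √((ρ−α)² + 4α(γ+ρ)))/(2(γ+ρ)) and x₂ = (ρ − α + √((ρ−α)² + 4α(γ+ρ)))/(2(γ+ρ)) of the characteristic polynomial x² − ((ρ−α)/(γ+ρ))x − α/(γ+ρ) are real, and both satisfy |x₁| < 1 and |x₂| < 1 if and only if ρ > α − γ/2. In particular, if 0 ≤ α < γ/2 then both roots have absolute value less than 1 for every ρ ≥ 0. -/

import Mathlib

set_option maxHeartbeats 1600000 in
/-- The roots x₁, x₂ of the characteristic polynomial x² − ((ρ−α)/(γ+ρ))x − α/(γ+ρ)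
(price and consumption memory model) are real, and both have absolute value less than 1
iff ρ > α − γ/2. In particular, if α < γ/2 both roots have absolute value less than 1. -/
theorem stmt_12 (α γ ρ : ℝ) (hα : 0 < α) (hγ : 0 < γ) (hρ : 0 ≤ ρ)
    (x₁ x₂ : ℝ)
    (hx₁ : x₁ = (ρ - α - Real.sqrt ((ρ - α) ^ 2 + 4 * α * (γ + ρ))) / (2 * (γ + ρ)))
    (hx₂ : x₂ = (ρ - α + Real.sqrt ((ρ - α) ^ 2 + 4 * α * (γ + ρ))) / (2 * (γ + ρ))) :
    (x₁ ^ 2 - ((ρ - α) / (γ + ρ)) * x₁ - α / (γ + ρ) = 0) ∧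
    (x₂ ^ 2 - ((ρ - α) / (γ + ρ)) * x₂ - α / (γ + ρ) = 0) ∧
    ((|x₁| < 1 ∧ |x₂| < 1) ↔ α - γ / 2 < ρ) ∧
    (α < γ / 2 → |x₁| < 1 ∧ |x₂| < 1) := by
  have hc : 0 < γ + ρ := by linarith
  have hc' : (γ + ρ) ≠ 0 := ne_of_gt hc
  set s : ℝ := Real.sqrt ((ρ - α) ^ 2 + 4 * α * (γ + ρ)) with hsdef
  have hD : 0 ≤ (ρ - α) ^ 2 + 4 * α * (γ + ρ) := by positivity
  have hs2 : s ^ 2 = (ρ - α) ^ 2 + 4 * α * (γ + ρ) := Real.sq_sqrt hD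
  have hs0 : 0 ≤ s := Real.sqrt_nonneg _
  clear_value s
  have hspos : 0 < s := by nlinarith
  have h1 : x₁ ^ 2 - ((ρ - α) / (γ + ρ)) * x₁ - α / (γ + ρ) = 0 := by
    rw [hx₁]; field_simp; linear_combination hs2
  have h2 : x₂ ^ 2 - ((ρ - α) / (γ + ρ)) * x₂ - α / (γ + ρ) = 0 := by
    rw [hx₂]; field_simp; linear_combination hs2
  -- s > ρ - α and s > -(ρ - α)
  have hsgt : ρ - α < s := by nlinarith
  have hsgt' : -(ρ - α) < s := by nlinarith
  have hx1neg : x₁ < 0 := by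
    rw [hx₁]; apply div_neg_of_neg_of_pos <;> nlinarith
  have hx2pos : 0 < x₂ := by
    rw [hx₂]; apply div_pos <;> nlinarith
  have hx2lt1 : x₂ < 1 := by
    rw [hx₂, div_lt_one (by linarith : (0:ℝ) < 2 * (γ + ρ))]
    nlinarith [sq_nonneg (s - (2 * γ + ρ + α))]
  refine ⟨h1, h2, ?_, ?_⟩
  · constructor
    · rintro ⟨ha1, _⟩
      have := (abs_lt.mp ha1).1
      have hx1' : -1 < x₁ := this
      rw [hx₁, lt_div_iff₀ (by linarith : (0:ℝ) < 2 * (γ + ρ))] at hx1'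
      -- -(2(γ+ρ)) < ρ - α - s, so s < ρ - α + 2(γ+ρ)
      nlinarith
    · intro h
      have hb : 0 < 2 * γ + 3 * ρ - α := by linarith
      have hx1gt : -1 < x₁ := by
        rw [hx₁, lt_div_iff₀ (by linarith : (0:ℝ) < 2 * (γ + ρ))]
        nlinarith [sq_nonneg (s - (2 * γ + 3 * ρ - α))]
      constructor
      · rw [abs_lt]; exact ⟨hx1gt, by linarith⟩
      · rw [abs_lt]; exact ⟨by linarith, hx2lt1⟩
  · intro h
    have hb : α - γ / 2 < ρ := by linarith
    have hx1gt : -1 < x₁ := by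
      rw [hx₁, lt_div_iff₀ (by linarith : (0:ℝ) < 2 * (γ + ρ))]
      nlinarith [sq_nonneg (s - (2 * γ + 3 * ρ - α))]
    exact ⟨abs_lt.mpr ⟨hx1gt, by linarith⟩, abs_lt.mpr ⟨by linarith, hx2lt1⟩⟩
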